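/- Let Γ be an abelian group, k a commutative ring, R a Γ-graded k-algebra whose homogeneous components are k-submodules, and I a graded two-sided ideal of R (so that R/I is again a Γ-graded k-algebra). Then the map sending ∑_γ (r^{(γ)} + I) p_γ to ∑_γ r^{(γ)} p_γ + I#Γ is a well-defined isomorphism of (non-unital) k-algebras (R/I)#Γ ≅ (R#Γ)/(I#Γ). -/

import Mathlib

/-- The smash-product multiplication on formal sums `∑_γ r^{(γ)} p_γ` (finitely supported
functions `Γ →₀ S`), relative to a multiplication `mul` on `S` and a family of
homogeneous-component projections `D : S → Γ → S`: it is the bilinear extension of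
`(r p_α)·(s p_β) = (r · s_{α−β}) p_β`. -/
noncomputable def smashMulWith {Γ S : Type*} [AddCommGroup Γ] [AddCommMonoid S]
    (mul : S → S → S) (D : S → Γ → S) (f g : Γ →₀ S) : Γ →₀ S :=
  f.sum fun α r => g.sum fun β s => Finsupp.single β (mul r (D s (α - β)))

/-- For a two-sided ideal `I` of a `k`-algebra `R`, the ideal `I#Γ` of the smash
product `R#Γ`, consisting of all formal sums all of whose coefficients lie in `I`,
here regarded as a `k`-submodule of `Γ →₀ R`. -/
def smashIdeal (Γ : Type*) {k R : Type*} [CommRing k] [Ring R] [Algebra k R]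
    (I : Ideal R) : Submodule k (Γ →₀ R) where
  carrier := {f | ∀ γ, f γ ∈ I}
  add_mem' := fun {a b} ha hb γ => by
    rw [Finsupp.add_apply]; exact I.add_mem (ha γ) (hb γ)
  zero_mem' := fun γ => by simp
  smul_mem' := fun c f hf γ => by
    rw [Finsupp.smul_apply, Algebra.smul_def]
    exact I.mul_mem_left _ (hf γ)

/-- Let `Γ` be an abelian group, `k` a commutative ring, `R` a `Γ`-graded `k`-algebra whose
homogeneous components are `k`-submodules, and `I` a graded two-sided ideal of `R`
(the quotient `R/I` then inherits a multiplication `mulQ` and homogeneous-component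
projections `D` from `R`).  Then the map `∑_γ (r^{(γ)} + I) p_γ ↦ ∑_γ r^{(γ)} p_γ + I#Γ`
is a well-defined isomorphism of (non-unital) `k`-algebras `(R/I)#Γ ≅ (R#Γ)/(I#Γ)`:
a `k`-linear equivalence carrying the smash multiplication of `(R/I)#Γ` to the
multiplication that `(R#Γ)/(I#Γ)` inherits from the smash multiplication of `R#Γ`. -/
theorem smash_product_of_quotient_iso {Γ : Type*} [AddCommGroup Γ] [DecidableEq Γ]
    {k : Type*} [CommRing k] {R : Type*} [Ring R] [Algebra k R]
    (𝒜 : Γ → Submodule k R) [GradedRing 𝒜]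
    (I : Ideal R)
    (hI2 : ∀ (a : R), ∀ x ∈ I, x * a ∈ I)
    (hIhom : ∀ x ∈ I, ∀ γ : Γ, ((DirectSum.decompose 𝒜 x γ : 𝒜 γ) : R) ∈ I)
    (mulQ : (R ⧸ I) → (R ⧸ I) → (R ⧸ I))
    (hmulQ : ∀ r s : R, mulQ (I.mkQ r) (I.mkQ s) = I.mkQ (r * s))
    (D : (R ⧸ I) → Γ → (R ⧸ I))
    (hD : ∀ (r : R) (γ : Γ), D (I.mkQ r) γ = I.mkQ ((DirectSum.decompose 𝒜 r γ : 𝒜 γ) : R)) :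
    ∃ e : (Γ →₀ (R ⧸ I)) ≃ₗ[k] ((Γ →₀ R) ⧸ smashIdeal Γ (k := k) I),
      (∀ f : Γ →₀ R,
        e (f.mapRange I.mkQ (map_zero _)) = Submodule.Quotient.mk f) ∧
      (∀ f g : Γ →₀ R,
        e (smashMulWith mulQ D (f.mapRange I.mkQ (map_zero _))
            (g.mapRange I.mkQ (map_zero _)))
          = Submodule.Quotient.mk
              (smashMulWith (· * ·)
                (fun (s : R) (δ : Γ) => ((DirectSum.decompose 𝒜 s δ : 𝒜 δ) : R)) f g)) := by
  classical
  set φ : (Γ →₀ R) →ₗ[k] (Γ →₀ (R ⧸ I)) := Finsupp.mapRange.linearMap I.mkQ with hφ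
  have hφapp : ∀ f : Γ →₀ R, φ f = f.mapRange I.mkQ (map_zero _) := fun f => rfl
  have hker : smashIdeal Γ (k := k) I ≤ LinearMap.ker φ := by
    intro f hf
    rw [LinearMap.mem_ker]
    ext γ
    simp only [hφapp, Finsupp.mapRange_apply, Finsupp.coe_zero, Pi.zero_apply,
      Submodule.mkQ_apply]
    exact (Submodule.Quotient.mk_eq_zero I).mpr (hf γ)
  set E : ((Γ →₀ R) ⧸ smashIdeal Γ (k := k) I) →ₗ[k] (Γ →₀ (R ⧸ I)) :=
    (smashIdeal Γ (k := k) I).liftQ φ hker with hE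
  have hEmk : ∀ f : Γ →₀ R, E (Submodule.Quotient.mk f) = φ f := fun f => rfl
  have hinj : Function.Injective E := by
    rw [← LinearMap.ker_eq_bot]
    rw [Submodule.ker_liftQ_eq_bot]
    intro f hf
    rw [LinearMap.mem_ker] at hf
    intro γ
    have h1 : (φ f) γ = 0 := by rw [hf]; rfl
    rw [hφapp, Finsupp.mapRange_apply, Submodule.mkQ_apply] at h1
    exact (Submodule.Quotient.mk_eq_zero I).mp h1
  have hsurj : Function.Surjective E := by
    intro g
    induction g using Finsupp.induction with
    | zero => exact ⟨0, map_zero _⟩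
    | single_add β s g _ _ ih =>
      obtain ⟨x, hx⟩ := ih
      obtain ⟨r, hr⟩ := Submodule.Quotient.mk_surjective I s
      refine ⟨x + Submodule.Quotient.mk (Finsupp.single β r), ?_⟩
      rw [map_add, hx, hEmk, hφapp, Finsupp.mapRange_single, Submodule.mkQ_apply, hr, add_comm]
  set e : (Γ →₀ (R ⧸ I)) ≃ₗ[k] ((Γ →₀ R) ⧸ smashIdeal Γ (k := k) I) :=
    (LinearEquiv.ofBijective E ⟨hinj, hsurj⟩).symm with he
  have key : ∀ f : Γ →₀ R, e (f.mapRange I.mkQ (map_zero _)) = Submodule.Quotient.mk f := by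
    intro f
    rw [he, LinearEquiv.symm_apply_eq]
    show f.mapRange I.mkQ (map_zero _) = E (Submodule.Quotient.mk f)
    rw [hEmk, hφapp]
  have hmul0 : ∀ x : R ⧸ I, mulQ x 0 = 0 := by
    intro x
    obtain ⟨r, hr⟩ := Submodule.Quotient.mk_surjective I x
    have h1 : (0 : R ⧸ I) = I.mkQ 0 := by simp
    have h2 : x = I.mkQ r := by rw [Submodule.mkQ_apply, hr]
    rw [h1, h2, hmulQ]; simp
  have hD0 : ∀ γ : Γ, D 0 γ = 0 := by
    intro γ
    have h1 : (0 : R ⧸ I) = I.mkQ 0 := by simp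
    rw [h1, hD]
    simp
  have hmul0' : ∀ x : R ⧸ I, mulQ 0 x = 0 := by
    intro x
    obtain ⟨r, hr⟩ := Submodule.Quotient.mk_surjective I x
    have h1 : (0 : R ⧸ I) = I.mkQ 0 := by simp
    have h2 : x = I.mkQ r := by rw [Submodule.mkQ_apply, hr]
    rw [h1, h2, hmulQ]; simp
  refine ⟨e, key, ?_⟩
  intro f g
  have main : smashMulWith mulQ D (f.mapRange I.mkQ (map_zero _)) (g.mapRange I.mkQ (map_zero _))
      = φ (smashMulWith (· * ·)
          (fun (s : R) (δ : Γ) => ((DirectSum.decompose 𝒜 s δ : 𝒜 δ) : R)) f g) := by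
    unfold smashMulWith
    rw [map_finsuppSum]
    rw [Finsupp.sum_mapRange_index (fun α => by
      simp only [hmul0', Finsupp.single_zero, Finsupp.sum_fun_zero])]
    apply Finsupp.sum_congr
    intro α _
    rw [Finsupp.sum_mapRange_index (fun β => by rw [hD0, hmul0, Finsupp.single_zero])]
    rw [map_finsuppSum]
    apply Finsupp.sum_congr
    intro β _
    rw [hD, hmulQ, hφapp, Finsupp.mapRange_single]
  rw [main, hφapp, key]
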